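/- There exists a guarded META with one clock and one energy variable that is fully ET-opaque and fully EN-opaque but not weakly ET-EN-opaque (hence also not fully ET-EN-opaque). Consequently, full ET-opacity together with full EN-opacity does not imply weak (nor full) ET-EN-opacity. -/

import Mathlib

namespace METAOpacity

open scoped Classical

/-- An inequality `v ⋈ d`: a variable index (clocks first, then energy variables),
a comparison code (`0` = `<`, `1` = `≤`, `2` = `≥`, `3` = `>`) and an integer constant. -/
abbrev Ineq : Type := ℕ × ℕ × ℤ

/-- An edge: source location, guard, action (`none` = ε), clock resets,
integer energy updates, target location. -/
abbrev Edge : Type := ℕ × List Ineq × Option ℕ × List ℕ × List ℤ × ℕ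

/-- A finitely presented guarded multi-energy timed automaton (guarded META):
number of actions, number of locations (location `0` is the initial one), number of
clocks, number of energy variables, list of private locations, list of final locations,
invariants (one per location), integer energy rates (one list per location, one entry per
energy variable), and edges.  Being a nested product of countable discrete data, this
type is `Primcodable`, so computability of functions on it makes sense. -/
abbrev GMETA : Type :=
  ℕ × ℕ × ℕ × ℕ × List ℕ × List ℕ × List (List Ineq) × List (List ℤ) × List Edge

def numAct (A : GMETA) : ℕ := A.1
def numLoc (A : GMETA) : ℕ := A.2.1
def numClk (A : GMETA) : ℕ := A.2.2.1
def numEn (A : GMETA) : ℕ := A.2.2.2.1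
def privLocs (A : GMETA) : List ℕ := A.2.2.2.2.1
def finalLocs (A : GMETA) : List ℕ := A.2.2.2.2.2.1
def invs (A : GMETA) : List (List Ineq) := A.2.2.2.2.2.2.1
def rates (A : GMETA) : List (List ℤ) := A.2.2.2.2.2.2.2.1
def edges (A : GMETA) : List Edge := A.2.2.2.2.2.2.2.2

def edgeSrc (e : Edge) : ℕ := e.1
def edgeGuard (e : Edge) : List Ineq := e.2.1
def edgeAct (e : Edge) : Option ℕ := e.2.2.1
def edgeResets (e : Edge) : List ℕ := e.2.2.2.1
def edgeUpdates (e : Edge) : List ℤ := e.2.2.2.2.1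
def edgeTgt (e : Edge) : ℕ := e.2.2.2.2.2

/-- A semantic state: location, clock valuation, energy valuation. -/
abbrev EState : Type := ℕ × (ℕ → ℝ) × (ℕ → ℝ)

def initState : EState := (0, fun _ => 0, fun _ => 0)

/-- Satisfaction of a single comparison. -/
def cmpSat (c : ℕ) (x : ℝ) (d : ℤ) : Prop :=
  if c = 0 then x < (d : ℝ)
  else if c = 1 then x ≤ (d : ℝ)
  else if c = 2 then (d : ℝ) ≤ x
  else if c = 3 then (d : ℝ) < x
  else False

/-- Value of variable `i` (a clock if `i < numClk A`, an energy variable otherwise). -/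
def varVal (A : GMETA) (w v : ℕ → ℝ) (i : ℕ) : ℝ :=
  if i < numClk A then w i else v (i - numClk A)

/-- Satisfaction of a conjunction of inequalities. -/
def satIneqs (A : GMETA) (w v : ℕ → ℝ) (g : List Ineq) : Prop :=
  ∀ q ∈ g, cmpSat q.2.1 (varVal A w v q.1) q.2.2

def invOf (A : GMETA) (l : ℕ) : List Ineq := (invs A).getD l []

def rateOf (A : GMETA) (l i : ℕ) : ℤ := ((rates A).getD l []).getD i 0

/-- A state is valid when its location exists, clocks and energies are non-negative,
and the invariant of the current location holds. -/
def validState (A : GMETA) (s : EState) : Prop :=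
  s.1 < numLoc A ∧ (∀ i, 0 ≤ s.2.1 i) ∧ (∀ i, 0 ≤ s.2.2 i) ∧
    satIneqs A s.2.1 s.2.2 (invOf A s.1)

def elapseClocks (w : ℕ → ℝ) (t : ℝ) : ℕ → ℝ := fun i => w i + t

def elapseEnergies (A : GMETA) (l : ℕ) (v : ℕ → ℝ) (t : ℝ) : ℕ → ℝ :=
  fun i => v i + (rateOf A l i : ℝ) * t

def resetClocks (R : List ℕ) (w : ℕ → ℝ) : ℕ → ℝ := fun i => if i ∈ R then 0 else w i

def updateEnergies (U : List ℤ) (v : ℕ → ℝ) : ℕ → ℝ := fun i => v i + ((U.getD i 0 : ℤ) : ℝ)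

/-- Timestamped traces of a guarded META, written in *reverse* chronological order
(the head of the list is the last state together with its absolute time).  Each step
consists of a delay (during which all intermediate states must be valid) followed by
the firing of an edge whose guard holds. -/
inductive Trace (A : GMETA) : List (EState × ℝ) → Prop where
  | init :
      validState A initState →
      Trace A [(initState, 0)]
  | step {tr : List (EState × ℝ)} {l : ℕ} {w v : ℕ → ℝ} {τ : ℝ} (t : ℝ) (e : Edge) :
      Trace A (((l, w, v), τ) :: tr) →
      0 ≤ t →
      (∀ t', 0 ≤ t' → t' ≤ t →
        validState A (l, elapseClocks w t', elapseEnergies A l v t')) →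
      e ∈ edges A →
      edgeSrc e = l →
      satIneqs A (elapseClocks w t) (elapseEnergies A l v t) (edgeGuard e) →
      validState A (edgeTgt e, resetClocks (edgeResets e) (elapseClocks w t),
        updateEnergies (edgeUpdates e) (elapseEnergies A l v t)) →
      Trace A (((edgeTgt e, resetClocks (edgeResets e) (elapseClocks w t),
        updateEnergies (edgeUpdates e) (elapseEnergies A l v t)), τ + t)
          :: ((l, w, v), τ) :: tr)

/-- Duration of a run (absolute time of its last state). -/
def runDur (tr : List (EState × ℝ)) : ℝ := tr.headI.2

/-- Last location of a run. -/
def runLoc (tr : List (EState × ℝ)) : ℕ := tr.headI.1.1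

/-- Final energies of a run. -/
def runEnergy (tr : List (EState × ℝ)) : ℕ → ℝ := tr.headI.1.2.2

/-- A private run: reaches a final location after having visited a private location. -/
def PrivRun (A : GMETA) (tr : List (EState × ℝ)) : Prop :=
  Trace A tr ∧ runLoc tr ∈ finalLocs A ∧ ∃ p ∈ tr, p.1.1 ∈ privLocs A

/-- A public run: reaches a final location without ever visiting a private location. -/
def PubRun (A : GMETA) (tr : List (EState × ℝ)) : Prop :=
  Trace A tr ∧ runLoc tr ∈ finalLocs A ∧ ∀ p ∈ tr, p.1.1 ∉ privLocs A

/-- Final energies of private runs. -/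
def EVpriv (A : GMETA) : Set (ℕ → ℝ) := {v | ∃ tr, PrivRun A tr ∧ runEnergy tr = v}

/-- Final energies of public runs. -/
def EVpub (A : GMETA) : Set (ℕ → ℝ) := {v | ∃ tr, PubRun A tr ∧ runEnergy tr = v}

/-- Durations of private runs. -/
def DTpriv (A : GMETA) : Set ℝ := {d | ∃ tr, PrivRun A tr ∧ runDur tr = d}

/-- Durations of public runs. -/
def DTpub (A : GMETA) : Set ℝ := {d | ∃ tr, PubRun A tr ∧ runDur tr = d}

/-- Pairs (duration, final energies) of private runs. -/
def DEVpriv (A : GMETA) : Set (ℝ × (ℕ → ℝ)) :=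
  {p | ∃ tr, PrivRun A tr ∧ runDur tr = p.1 ∧ runEnergy tr = p.2}

/-- Pairs (duration, final energies) of public runs. -/
def DEVpub (A : GMETA) : Set (ℝ × (ℕ → ℝ)) :=
  {p | ∃ tr, PubRun A tr ∧ runDur tr = p.1 ∧ runEnergy tr = p.2}

/-- The three variants of opacity: existential, weak, full. -/
inductive Var3 where
  | ex : Var3
  | weak : Var3
  | full : Var3

/-- δ-EN-opacity. -/
def ENOpaque : Var3 → GMETA → Prop
  | .ex, A => (EVpriv A ∩ EVpub A).Nonempty
  | .weak, A => EVpriv A ⊆ EVpub A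
  | .full, A => EVpriv A = EVpub A

/-- δ-ET-EN-opacity. -/
def ETENOpaque : Var3 → GMETA → Prop
  | .ex, A => (DEVpriv A ∩ DEVpub A).Nonempty
  | .weak, A => DEVpriv A ⊆ DEVpub A
  | .full, A => DEVpriv A = DEVpub A

/-- The two observation kinds: final energies only (EN), or duration and final
energies (ET-EN). -/
inductive Sig2 where
  | en : Sig2
  | eten : Sig2

/-- δ-σ-opacity. -/
def Opq : Var3 → Sig2 → GMETA → Prop
  | δ, .en, A => ENOpaque δ A
  | δ, .eten, A => ETENOpaque δ A

/-- Energy level of a (reverse chronological) run at absolute time `t`: the energy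
valuation of the last state reached at absolute time at most `t` (the zero valuation
if there is no such state). -/
noncomputable def ELat : List (EState × ℝ) → ℝ → (ℕ → ℝ)
  | [], _ => fun _ => 0
  | p :: rest, t => if p.2 ≤ t then p.1.2.2 else ELat rest t

/-- Discrete energy observation: energy levels at times `1, …, ⌈duration⌉`. -/
noncomputable def DEO (tr : List (EState × ℝ)) : List (ℕ → ℝ) :=
  (List.range (Nat.ceil (runDur tr))).map (fun k => ELat tr ((k : ℝ) + 1))

/-- δ-DE-opacity. -/
def DEOpaque : Var3 → GMETA → Prop
  | .ex, A => ∃ tr tr', PrivRun A tr ∧ PubRun A tr' ∧ DEO tr = DEO tr'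
  | .weak, A => ∀ tr, PrivRun A tr → ∃ tr', PubRun A tr' ∧ DEO tr = DEO tr'
  | .full, A => (∀ tr, PrivRun A tr → ∃ tr', PubRun A tr' ∧ DEO tr = DEO tr') ∧
      (∀ tr, PubRun A tr → ∃ tr', PrivRun A tr' ∧ DEO tr' = DEO tr)

/-- Keeps, from a chronological sequence of timestamped energy valuations, exactly the
valuations that change at least one energy variable (w.r.t.\ the previous valuation,
given as first argument). -/
noncomputable def energyChangesAux : (ℕ → ℝ) → List ((ℕ → ℝ) × ℝ) → List ((ℕ → ℝ) × ℝ)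
  | _, [] => []
  | prev, p :: rest =>
      if p.1 = prev then energyChangesAux prev rest else p :: energyChangesAux p.1 rest

/-- Timestamped energy changes of a run, in chronological order. -/
noncomputable def energyChanges (tr : List (EState × ℝ)) : List ((ℕ → ℝ) × ℝ) :=
  energyChangesAux (fun _ => 0) (tr.reverse.map (fun p => (p.1.2.2, p.2)))

/-- Buffered energy level at integer time `τ ≥ 1`: the sequence of successive energy
valuations taken at absolute timestamps in `(τ − 1, τ]` (in `[0, 1]` for `τ = 1`),
keeping only the valuations that change at least one energy variable. -/
noncomputable def bEL (tr : List (EState × ℝ)) (τ : ℕ) : List (ℕ → ℝ) :=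
  ((energyChanges tr).filter
    (fun p => decide ((τ = 1 ∨ (τ : ℝ) - 1 < p.2) ∧ p.2 ≤ (τ : ℝ)))).map Prod.fst

/-- Buffered discrete energy observation: `bEL` at times `1, …, ⌈duration⌉`. -/
noncomputable def bDEO (tr : List (EState × ℝ)) : List (List (ℕ → ℝ)) :=
  (List.range (Nat.ceil (runDur tr))).map (fun k => bEL tr (k + 1))

/-- δ-bDE-opacity. -/
def bDEOpaque : Var3 → GMETA → Prop
  | .ex, A => ∃ tr tr', PrivRun A tr ∧ PubRun A tr' ∧ bDEO tr = bDEO tr'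
  | .weak, A => ∀ tr, PrivRun A tr → ∃ tr', PubRun A tr' ∧ bDEO tr = bDEO tr'
  | .full, A => (∀ tr, PrivRun A tr → ∃ tr', PubRun A tr' ∧ bDEO tr = bDEO tr') ∧
      (∀ tr, PubRun A tr → ∃ tr', PrivRun A tr' ∧ bDEO tr' = bDEO tr)

/-- Basic well-formedness of the presentation: the initial location exists, private and
final locations are non-empty sets of locations, final locations are not private and
have no outgoing edge, invariant and rate lists have the right lengths, and all indices
are in range. -/
def WellFormed (A : GMETA) : Prop :=
  0 < numLoc A ∧
  privLocs A ≠ [] ∧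
  finalLocs A ≠ [] ∧
  (∀ l ∈ privLocs A, l < numLoc A) ∧
  (∀ l ∈ finalLocs A, l < numLoc A ∧ l ∉ privLocs A) ∧
  (invs A).length = numLoc A ∧
  (∀ g ∈ invs A, ∀ q ∈ g, q.1 < numClk A + numEn A) ∧
  (rates A).length = numLoc A ∧
  (∀ r ∈ rates A, r.length = numEn A) ∧
  (∀ e ∈ edges A, edgeSrc e < numLoc A ∧ edgeTgt e < numLoc A ∧
    edgeSrc e ∉ finalLocs A ∧
    (∀ a, edgeAct e = some a → a < numAct A) ∧
    (∀ q ∈ edgeGuard e, q.1 < numClk A + numEn A) ∧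
    (∀ x ∈ edgeResets e, x < numClk A) ∧
    (edgeUpdates e).length = numEn A)

/-- Discrete: all energy rates are `0` (energy changes only via edge updates). -/
def Discrete (A : GMETA) : Prop := ∀ r ∈ rates A, ∀ z ∈ r, z = 0

/-- Positive: all energy rates and all energy updates are non-negative. -/
def Positive (A : GMETA) : Prop :=
  (∀ r ∈ rates A, ∀ z ∈ r, 0 ≤ z) ∧ ∀ e ∈ edges A, ∀ z ∈ edgeUpdates e, 0 ≤ z

/-- META (as opposed to *guarded* META): guards and invariants constrain clocks only. -/
def ClockGuardsOnly (A : GMETA) : Prop :=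
  (∀ g ∈ invs A, ∀ q ∈ g, q.1 < numClk A) ∧
    ∀ e ∈ edges A, ∀ q ∈ edgeGuard e, q.1 < numClk A

/-- Integer-switching: along every run, any edge whose target location has a different
energy rate than its source (for some energy variable) is taken at an integer absolute
time. -/
def IntegerSwitching (A : GMETA) : Prop :=
  ∀ (s' : EState) (τ' : ℝ) (s : EState) (τ : ℝ) (rest : List (EState × ℝ)),
    Trace A ((s', τ') :: (s, τ) :: rest) →
    (∃ i < numEn A, rateOf A s.1 i ≠ rateOf A s'.1 i) →
    ∃ n : ℕ, τ' = (n : ℝ)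

/-- Integer execution-time: every run reaching a final location has integer duration. -/
def IntegerET (A : GMETA) : Prop :=
  ∀ tr, Trace A tr → runLoc tr ∈ finalLocs A → ∃ n : ℕ, runDur tr = (n : ℝ)

/-- Some run of `A` reaches a state with location `l`. -/
def ReachLoc (A : GMETA) (l : ℕ) : Prop :=
  ∃ tr p, Trace A tr ∧ p ∈ tr ∧ p.1.1 = l

/-- Some run of `A` of duration exactly `T` ends in location `l`. -/
def ReachLocInTime (A : GMETA) (l : ℕ) (T : ℕ) : Prop :=
  ∃ tr, Trace A tr ∧ runLoc tr = l ∧ runDur tr = (T : ℝ)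

/-- A problem `P` over guarded METAs is decidable on the class `C` when some computable
(Boolean-valued, hence total) function decides it on every automaton of the class. -/
def DecidableOn (C P : GMETA → Prop) : Prop :=
  ∃ f : GMETA → Bool, Computable f ∧ ∀ A, C A → (f A = true ↔ P A)


/-! ### Space-bounded decidability, via Turing machines -/

/-- Binary presentation of a guarded META on the tape alphabet `Option Bool`. -/
def tapeInput (A : GMETA) : List (Option Bool) := (Nat.bits (Encodable.encode A)).map some

/-- One-step relation of a (deterministic) Turing machine. -/
def TMStep {Λ : Type} [Inhabited Λ]
    (M : Turing.TM0.Machine (Option Bool) Λ) (a b : Turing.TM0.Cfg (Option Bool) Λ) : Prop :=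
  Turing.TM0.step M a = some b

/-- `P` is decided on the class `C` by a Turing machine using at most `S n` tape cells
on inputs of length `n`: on every input of the class the machine halts, the halting
configuration reads `some true` at the head iff `P` holds, and every reachable
configuration is blank except within distance `S n` of the head. -/
def DecidesInSpace (S : ℕ → ℕ) (C P : GMETA → Prop) : Prop :=
  ∃ (Λ : Type) (_ : Inhabited Λ) (_ : Fintype Λ),
  ∃ M : Turing.TM0.Machine (Option Bool) Λ,
    ∀ A : GMETA, C A →
      (∃ c, Relation.ReflTransGen (TMStep M) (Turing.TM0.init (tapeInput A)) c ∧
        Turing.TM0.step M c = none ∧ (c.Tape.head = some true ↔ P A)) ∧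
      ∀ c, Relation.ReflTransGen (TMStep M) (Turing.TM0.init (tapeInput A)) c →
        ∀ i : ℤ, (S (tapeInput A).length : ℤ) < |i| → c.Tape.nth i = none

/-- Membership in `EXPSPACE`, relative to the class `C`. -/
def InEXPSPACEOn (C P : GMETA → Prop) : Prop :=
  ∃ k : ℕ, DecidesInSpace (fun n => 2 ^ (n ^ k + k)) C P

/-- Membership in `2EXPSPACE`, relative to the class `C`. -/
def In2EXPSPACEOn (C P : GMETA → Prop) : Prop :=
  ∃ k : ℕ, DecidesInSpace (fun n => 2 ^ 2 ^ (n ^ k + k)) C P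

/-- Membership in `3EXPSPACE`, relative to the class `C`. -/
def In3EXPSPACEOn (C P : GMETA → Prop) : Prop :=
  ∃ k : ℕ, DecidesInSpace (fun n => 2 ^ 2 ^ 2 ^ (n ^ k + k)) C P

/-- Full ET-opacity: the durations of private and public runs coincide. -/
def ETOpaqueFull (A : GMETA) : Prop := DTpriv A = DTpub A

/-! ### Auxiliary construction for Statement 18 -/

/-- zero energy valuation -/
def zf : ℕ → ℝ := fun _ => 0
/-- energy valuation with one unit in variable 0 -/
def onef : ℕ → ℝ := fun i => if i = 0 then 1 else 0

/-- guard `x = 1` -/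
def gOne : List Ineq := [(0,2,1), (0,1,1)]
/-- guard `x ≤ 0` -/
def gZero : List Ineq := [(0,1,0)]

def Aex : GMETA :=
  (0, 6, 1, 1, [1,4], [3],
   [[],[],[],[],[],[]],
   [[0],[0],[0],[0],[0],[0]],
   [(0, gOne, none, [], [0], 1),
    (1, gOne, none, [], [0], 3),
    (0, gZero, none, [], [1], 4),
    (4, gZero, none, [], [0], 3),
    (0, gOne, none, [], [1], 2),
    (2, gOne, none, [], [0], 3),
    (0, gZero, none, [], [0], 5),
    (5, gZero, none, [], [0], 3)])

lemma rateOf_Aex (l i : ℕ) : rateOf Aex l i = 0 := by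
  rcases l with _|_|_|_|_|_|l <;> rcases i with _|i <;> rfl

lemma invOf_Aex (l : ℕ) : invOf Aex l = [] := by
  rcases l with _|_|_|_|_|_|l <;> rfl

lemma elapseEnergies_Aex (l : ℕ) (v : ℕ → ℝ) (t : ℝ) :
    elapseEnergies Aex l v t = v := by
  funext i; simp [elapseEnergies, rateOf_Aex]

lemma satIneqs_nil (A : GMETA) (w v : ℕ → ℝ) : satIneqs A w v [] := by
  intro q hq; simp at hq

lemma validState_Aex (l : ℕ) (w v : ℕ → ℝ) :
    validState Aex (l, w, v) ↔ l < 6 ∧ (∀ i, 0 ≤ w i) ∧ (∀ i, 0 ≤ v i) := by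
  constructor
  · rintro ⟨h1, h2, h3, -⟩; exact ⟨h1, h2, h3⟩
  · rintro ⟨h1, h2, h3⟩; exact ⟨h1, h2, h3, by rw [invOf_Aex]; exact satIneqs_nil _ _ _⟩

lemma satIneqs_gOne (w v : ℕ → ℝ) : satIneqs Aex w v gOne ↔ w 0 = 1 := by
  simp [satIneqs, gOne, varVal, cmpSat, numClk, Aex]
  constructor
  · rintro ⟨h1, h2⟩; linarith
  · rintro h; constructor <;> simp [h]

lemma satIneqs_gZero (w v : ℕ → ℝ) : satIneqs Aex w v gZero ↔ w 0 ≤ 0 := by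
  simp [satIneqs, gZero, varVal, cmpSat, numClk, Aex]

abbrev NP (tr : List (EState × ℝ)) : Prop := ∀ p ∈ tr, ¬(p.1.1 = 1 ∨ p.1.1 = 4)
abbrev HP (tr : List (EState × ℝ)) : Prop := ∃ p ∈ tr, p.1.1 = 1 ∨ p.1.1 = 4

lemma resetClocks_nil (w : ℕ → ℝ) : resetClocks [] w = w := by
  funext i; simp [resetClocks]

lemma elapse_const (a b : ℝ) : elapseClocks (fun _ => a) b = fun _ => a + b := rfl

lemma upd0 (v : ℕ → ℝ) : updateEnergies [(0:ℤ)] v = v := by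
  funext i; rcases i with _|i <;> simp [updateEnergies]

lemma upd1 : updateEnergies [(1:ℤ)] zf = onef := by
  funext i; rcases i with _|i <;> simp [updateEnergies, zf, onef]

lemma NP_cons {l' : ℕ} {w' v' : ℕ → ℝ} {τ' : ℝ} {rest} (h : NP rest)
    (h1 : l' ≠ 1) (h2 : l' ≠ 4) : NP (((l', w', v'), τ') :: rest) := by
  rintro p hp
  rcases List.mem_cons.1 hp with rfl | hp
  · simp [h1, h2]
  · exact h p hp

lemma HP_cons {x : EState × ℝ} {rest} (h : HP rest) : HP (x :: rest) := by
  obtain ⟨p, hp, h⟩ := h; exact ⟨p, List.mem_cons_of_mem _ hp, h⟩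

lemma HP_head {l' : ℕ} {w' v' : ℕ → ℝ} {τ' : ℝ} {rest} (h : l' = 1 ∨ l' = 4) :
    HP (((l', w', v'), τ') :: rest) := ⟨_, List.mem_cons_self, h⟩

lemma charac {tr} (h : Trace Aex tr) :
    tr.headI.1.2.1 = (fun _ => tr.headI.2) ∧
    ((tr.headI.1.1 = 0 ∧ tr.headI.2 = 0 ∧ tr.headI.1.2.2 = zf ∧ NP tr) ∨
     (tr.headI.1.1 = 1 ∧ tr.headI.2 = 1 ∧ tr.headI.1.2.2 = zf) ∨
     (tr.headI.1.1 = 4 ∧ tr.headI.2 = 0 ∧ tr.headI.1.2.2 = onef) ∨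
     (tr.headI.1.1 = 2 ∧ tr.headI.2 = 1 ∧ tr.headI.1.2.2 = onef ∧ NP tr) ∨
     (tr.headI.1.1 = 5 ∧ tr.headI.2 = 0 ∧ tr.headI.1.2.2 = zf ∧ NP tr) ∨
     (tr.headI.1.1 = 3 ∧
       ((tr.headI.2 = 1 ∧ tr.headI.1.2.2 = zf ∧ HP tr) ∨
        (tr.headI.2 = 0 ∧ tr.headI.1.2.2 = onef ∧ HP tr) ∨
        (tr.headI.2 = 1 ∧ tr.headI.1.2.2 = onef ∧ NP tr) ∨
        (tr.headI.2 = 0 ∧ tr.headI.1.2.2 = zf ∧ NP tr)))) := by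
  induction h with
  | init h =>
      refine ⟨rfl, Or.inl ⟨rfl, rfl, rfl, ?_⟩⟩
      rintro p hp; simp at hp; subst hp; simp [initState]
  | @step tr l w v τ t e h ht hval hmem hsrc hg hv ih =>
      clear hval hv h
      simp only [List.headI_cons] at ih ⊢
      obtain ⟨hw, hQ⟩ := ih
      simp only [Aex, edges, List.mem_cons, List.not_mem_nil, or_false] at hmem
      rcases hmem with rfl|rfl|rfl|rfl|rfl|rfl|rfl|rfl
      · -- 0 → 1, x = 1, +0
        obtain rfl : (0:ℕ) = l := hsrc
        rcases hQ with ⟨-, hτ, hv0, hnp⟩ | ⟨h',-⟩ | ⟨h',-⟩ | ⟨h',-⟩ | ⟨h',-⟩ | ⟨h',-⟩ <;>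
          try exact absurd h' (by norm_num)
        have hg' : elapseClocks w t 0 = 1 := (satIneqs_gOne _ _).1 hg
        rw [hw] at hg'
        obtain rfl : t = 1 := by simpa [elapseClocks, hτ] using hg'
        refine ⟨?_, Or.inr (Or.inl ⟨rfl, by rw [hτ]; norm_num, ?_⟩)⟩
        · rw [hw, hτ]
          show resetClocks [] (elapseClocks (fun _ => (0:ℝ)) 1) = _
          rw [elapse_const, resetClocks_nil]
        · show updateEnergies [0] (elapseEnergies Aex 0 v 1) = zf
          rw [elapseEnergies_Aex, upd0, hv0]
      · -- 1 → 3, x = 1, +0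
        obtain rfl : (1:ℕ) = l := hsrc
        rcases hQ with ⟨h',-⟩ | ⟨-, hτ, hv0⟩ | ⟨h',-⟩ | ⟨h',-⟩ | ⟨h',-⟩ | ⟨h',-⟩ <;>
          try exact absurd h' (by norm_num)
        have hg' : elapseClocks w t 0 = 1 := (satIneqs_gOne _ _).1 hg
        rw [hw] at hg'
        obtain rfl : t = 0 := by
          have := hg'
          simp only [elapseClocks, hτ] at this
          linarith
        refine ⟨?_, Or.inr (Or.inr (Or.inr (Or.inr (Or.inr
          ⟨rfl, Or.inl ⟨by rw [hτ]; norm_num, ?_, HP_cons (HP_head (Or.inl rfl))⟩⟩))))⟩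
        · rw [hw, hτ]
          show resetClocks [] (elapseClocks (fun _ => (1:ℝ)) 0) = _
          rw [elapse_const, resetClocks_nil]
        · show updateEnergies [0] (elapseEnergies Aex 1 v 0) = zf
          rw [elapseEnergies_Aex, upd0, hv0]
      · -- 0 → 4, x ≤ 0, +1
        obtain rfl : (0:ℕ) = l := hsrc
        rcases hQ with ⟨-, hτ, hv0, hnp⟩ | ⟨h',-⟩ | ⟨h',-⟩ | ⟨h',-⟩ | ⟨h',-⟩ | ⟨h',-⟩ <;>
          try exact absurd h' (by norm_num)
        have hg' : elapseClocks w t 0 ≤ 0 := (satIneqs_gZero _ _).1 hg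
        rw [hw] at hg'
        obtain rfl : t = 0 := by
          simp only [elapseClocks, hτ] at hg'
          linarith
        refine ⟨?_, Or.inr (Or.inr (Or.inl ⟨rfl, by rw [hτ]; norm_num, ?_⟩))⟩
        · rw [hw, hτ]
          show resetClocks [] (elapseClocks (fun _ => (0:ℝ)) 0) = _
          rw [elapse_const, resetClocks_nil]
        · show updateEnergies [1] (elapseEnergies Aex 0 v 0) = onef
          rw [elapseEnergies_Aex, hv0, upd1]
      · -- 4 → 3, x ≤ 0, +0
        obtain rfl : (4:ℕ) = l := hsrc
        rcases hQ with ⟨h',-⟩ | ⟨h',-⟩ | ⟨-, hτ, hv0⟩ | ⟨h',-⟩ | ⟨h',-⟩ | ⟨h',-⟩ <;>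
          try exact absurd h' (by norm_num)
        have hg' : elapseClocks w t 0 ≤ 0 := (satIneqs_gZero _ _).1 hg
        rw [hw] at hg'
        obtain rfl : t = 0 := by
          simp only [elapseClocks, hτ] at hg'
          linarith
        refine ⟨?_, Or.inr (Or.inr (Or.inr (Or.inr (Or.inr
          ⟨rfl, Or.inr (Or.inl ⟨by rw [hτ]; norm_num, ?_,
            HP_cons (HP_head (Or.inr rfl))⟩)⟩))))⟩
        · rw [hw, hτ]
          show resetClocks [] (elapseClocks (fun _ => (0:ℝ)) 0) = _
          rw [elapse_const, resetClocks_nil]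
        · show updateEnergies [0] (elapseEnergies Aex 4 v 0) = onef
          rw [elapseEnergies_Aex, upd0, hv0]
      · -- 0 → 2, x = 1, +1
        obtain rfl : (0:ℕ) = l := hsrc
        rcases hQ with ⟨-, hτ, hv0, hnp⟩ | ⟨h',-⟩ | ⟨h',-⟩ | ⟨h',-⟩ | ⟨h',-⟩ | ⟨h',-⟩ <;>
          try exact absurd h' (by norm_num)
        have hg' : elapseClocks w t 0 = 1 := (satIneqs_gOne _ _).1 hg
        rw [hw] at hg'
        obtain rfl : t = 1 := by simpa [elapseClocks, hτ] using hg'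
        refine ⟨?_, Or.inr (Or.inr (Or.inr (Or.inl
          ⟨rfl, by rw [hτ]; norm_num, ?_, NP_cons hnp (by decide) (by decide)⟩)))⟩
        · rw [hw, hτ]
          show resetClocks [] (elapseClocks (fun _ => (0:ℝ)) 1) = _
          rw [elapse_const, resetClocks_nil]
        · show updateEnergies [1] (elapseEnergies Aex 0 v 1) = onef
          rw [elapseEnergies_Aex, hv0, upd1]
      · -- 2 → 3, x = 1, +0
        obtain rfl : (2:ℕ) = l := hsrc
        rcases hQ with ⟨h',-⟩ | ⟨h',-⟩ | ⟨h',-⟩ | ⟨-, hτ, hv0, hnp⟩ | ⟨h',-⟩ | ⟨h',-⟩ <;>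
          try exact absurd h' (by norm_num)
        have hg' : elapseClocks w t 0 = 1 := (satIneqs_gOne _ _).1 hg
        rw [hw] at hg'
        obtain rfl : t = 0 := by
          have := hg'
          simp only [elapseClocks, hτ] at this
          linarith
        refine ⟨?_, Or.inr (Or.inr (Or.inr (Or.inr (Or.inr
          ⟨rfl, Or.inr (Or.inr (Or.inl ⟨by rw [hτ]; norm_num, ?_,
            NP_cons hnp (by decide) (by decide)⟩))⟩))))⟩
        · rw [hw, hτ]
          show resetClocks [] (elapseClocks (fun _ => (1:ℝ)) 0) = _
          rw [elapse_const, resetClocks_nil]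
        · show updateEnergies [0] (elapseEnergies Aex 2 v 0) = onef
          rw [elapseEnergies_Aex, upd0, hv0]
      · -- 0 → 5, x ≤ 0, +0
        obtain rfl : (0:ℕ) = l := hsrc
        rcases hQ with ⟨-, hτ, hv0, hnp⟩ | ⟨h',-⟩ | ⟨h',-⟩ | ⟨h',-⟩ | ⟨h',-⟩ | ⟨h',-⟩ <;>
          try exact absurd h' (by norm_num)
        have hg' : elapseClocks w t 0 ≤ 0 := (satIneqs_gZero _ _).1 hg
        rw [hw] at hg'
        obtain rfl : t = 0 := by
          simp only [elapseClocks, hτ] at hg'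
          linarith
        refine ⟨?_, Or.inr (Or.inr (Or.inr (Or.inr (Or.inl
          ⟨rfl, by rw [hτ]; norm_num, ?_, NP_cons hnp (by decide) (by decide)⟩))))⟩
        · rw [hw, hτ]
          show resetClocks [] (elapseClocks (fun _ => (0:ℝ)) 0) = _
          rw [elapse_const, resetClocks_nil]
        · show updateEnergies [0] (elapseEnergies Aex 0 v 0) = zf
          rw [elapseEnergies_Aex, upd0, hv0]
      · -- 5 → 3, x ≤ 0, +0
        obtain rfl : (5:ℕ) = l := hsrc
        rcases hQ with ⟨h',-⟩ | ⟨h',-⟩ | ⟨h',-⟩ | ⟨h',-⟩ | ⟨-, hτ, hv0, hnp⟩ | ⟨h',-⟩ <;>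
          try exact absurd h' (by norm_num)
        have hg' : elapseClocks w t 0 ≤ 0 := (satIneqs_gZero _ _).1 hg
        rw [hw] at hg'
        obtain rfl : t = 0 := by
          simp only [elapseClocks, hτ] at hg'
          linarith
        refine ⟨?_, Or.inr (Or.inr (Or.inr (Or.inr (Or.inr
          ⟨rfl, Or.inr (Or.inr (Or.inr ⟨by rw [hτ]; norm_num, ?_,
            NP_cons hnp (by decide) (by decide)⟩))⟩))))⟩
        · rw [hw, hτ]
          show resetClocks [] (elapseClocks (fun _ => (0:ℝ)) 0) = _
          rw [elapse_const, resetClocks_nil]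
        · show updateEnergies [0] (elapseEnergies Aex 5 v 0) = zf
          rw [elapseEnergies_Aex, upd0, hv0]

lemma Trace.congr {A : GMETA} {tr tr' : List (EState × ℝ)} (h : Trace A tr)
    (e : tr = tr') : Trace A tr' := e ▸ h

lemma zf_nonneg : ∀ i, 0 ≤ zf i := fun _ => le_refl 0
lemma onef_nonneg : ∀ i, 0 ≤ onef i := by intro i; unfold onef; split <;> norm_num
lemma zf_ne_onef : zf ≠ onef := by
  intro h
  have := congrFun h 0
  simp [zf, onef] at this

lemma step_valid_mid (l : ℕ) (hl : l < 6) (a : ℝ) (ha : 0 ≤ a) (v : ℕ → ℝ)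
    (hv : ∀ i, 0 ≤ v i) (T : ℝ) :
    ∀ t', 0 ≤ t' → t' ≤ T →
      validState Aex (l, elapseClocks (fun _ => a) t', elapseEnergies Aex l v t') := by
  intro t' h1 _
  refine (validState_Aex _ _ _).2 ⟨hl, ?_, ?_⟩
  · intro i; simp only [elapseClocks]; linarith
  · intro i; rw [elapseEnergies_Aex]; exact hv i

lemma ex_priv1 : ∃ tr, PrivRun Aex tr ∧ runDur tr = 1 ∧ runEnergy tr = zf := by
  have h0 : Trace Aex [((0, fun _ => (0:ℝ), zf), 0)] :=
    Trace.init ((validState_Aex _ _ _).2 ⟨by norm_num [edgeTgt], fun _ => le_refl 0, zf_nonneg⟩)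
  have ew : resetClocks [] (elapseClocks (fun _ => (0:ℝ)) 1) = fun _ => (1:ℝ) := by
    rw [elapse_const, resetClocks_nil]; funext i; norm_num
  have ev : updateEnergies [0] (elapseEnergies Aex 0 zf 1) = zf := by
    rw [elapseEnergies_Aex, upd0]
  have h1 : Trace Aex [((1, fun _ => (1:ℝ), zf), 0 + 1), ((0, fun _ => (0:ℝ), zf), 0)] := by
    have hs := Trace.step (t := 1) (e := ((0:ℕ), gOne, none, ([]:List ℕ), [(0:ℤ)], 1)) h0
      (by norm_num) (step_valid_mid 0 (by norm_num) 0 le_rfl zf zf_nonneg 1)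
      (by simp [Aex, edges]) rfl
      ((satIneqs_gOne _ _).2 (by simp [elapseClocks]))
      ((validState_Aex _ _ _).2 ⟨by norm_num [edgeTgt], by simp only [edgeResets]; rw [ew]; intro i; norm_num,
        by simp only [edgeUpdates]; rw [ev]; exact zf_nonneg⟩)
    exact Trace.congr hs (by simp only [edgeTgt, edgeResets, edgeUpdates]; rw [ew, ev])
  have ew2 : resetClocks [] (elapseClocks (fun _ => (1:ℝ)) 0) = fun _ => (1:ℝ) := by
    rw [elapse_const, resetClocks_nil]; funext i; norm_num
  have ev2 : updateEnergies [0] (elapseEnergies Aex 1 zf 0) = zf := by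
    rw [elapseEnergies_Aex, upd0]
  have h2 : Trace Aex [((3, fun _ => (1:ℝ), zf), 0 + 1 + 0),
      ((1, fun _ => (1:ℝ), zf), 0 + 1), ((0, fun _ => (0:ℝ), zf), 0)] := by
    have hs := Trace.step (t := 0) (e := ((1:ℕ), gOne, none, ([]:List ℕ), [(0:ℤ)], 3)) h1
      le_rfl (step_valid_mid 1 (by norm_num) 1 (by norm_num) zf zf_nonneg 0)
      (by simp [Aex, edges]) rfl
      ((satIneqs_gOne _ _).2 (by simp [elapseClocks]))
      ((validState_Aex _ _ _).2 ⟨by norm_num [edgeTgt], by simp only [edgeResets]; rw [ew2]; intro i; norm_num,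
        by simp only [edgeUpdates]; rw [ev2]; exact zf_nonneg⟩)
    exact Trace.congr hs (by simp only [edgeTgt, edgeResets, edgeUpdates]; rw [ew2, ev2])
  refine ⟨_, ⟨h2, by simp [runLoc, finalLocs, Aex], ?_⟩, by norm_num [runDur], rfl⟩
  exact ⟨((1, fun _ => (1:ℝ), zf), 0 + 1), by simp, by simp [privLocs, Aex]⟩

lemma ex_priv0 : ∃ tr, PrivRun Aex tr ∧ runDur tr = 0 ∧ runEnergy tr = onef := by
  have h0 : Trace Aex [((0, fun _ => (0:ℝ), zf), 0)] :=
    Trace.init ((validState_Aex _ _ _).2 ⟨by norm_num [edgeTgt], fun _ => le_refl 0, zf_nonneg⟩)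
  have ew : resetClocks [] (elapseClocks (fun _ => (0:ℝ)) 0) = fun _ => (0:ℝ) := by
    rw [elapse_const, resetClocks_nil]; funext i; norm_num
  have ev : updateEnergies [1] (elapseEnergies Aex 0 zf 0) = onef := by
    rw [elapseEnergies_Aex, upd1]
  have h1 : Trace Aex [((4, fun _ => (0:ℝ), onef), 0 + 0), ((0, fun _ => (0:ℝ), zf), 0)] := by
    have hs := Trace.step (t := 0) (e := ((0:ℕ), gZero, none, ([]:List ℕ), [(1:ℤ)], 4)) h0
      le_rfl (step_valid_mid 0 (by norm_num) 0 le_rfl zf zf_nonneg 0)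
      (by simp [Aex, edges]) rfl
      ((satIneqs_gZero _ _).2 (by simp [elapseClocks]))
      ((validState_Aex _ _ _).2 ⟨by norm_num [edgeTgt], by simp only [edgeResets]; rw [ew]; intro i; norm_num,
        by simp only [edgeUpdates]; rw [ev]; exact onef_nonneg⟩)
    exact Trace.congr hs (by simp only [edgeTgt, edgeResets, edgeUpdates]; rw [ew, ev])
  have ev2 : updateEnergies [0] (elapseEnergies Aex 4 onef 0) = onef := by
    rw [elapseEnergies_Aex, upd0]
  have h2 : Trace Aex [((3, fun _ => (0:ℝ), onef), 0 + 0 + 0),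
      ((4, fun _ => (0:ℝ), onef), 0 + 0), ((0, fun _ => (0:ℝ), zf), 0)] := by
    have hs := Trace.step (t := 0) (e := ((4:ℕ), gZero, none, ([]:List ℕ), [(0:ℤ)], 3)) h1
      le_rfl (step_valid_mid 4 (by norm_num) 0 le_rfl onef onef_nonneg 0)
      (by simp [Aex, edges]) rfl
      ((satIneqs_gZero _ _).2 (by simp [elapseClocks]))
      ((validState_Aex _ _ _).2 ⟨by norm_num [edgeTgt], by simp only [edgeResets]; rw [ew]; intro i; norm_num,
        by simp only [edgeUpdates]; rw [ev2]; exact onef_nonneg⟩)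
    exact Trace.congr hs (by simp only [edgeTgt, edgeResets, edgeUpdates]; rw [ew, ev2])
  refine ⟨_, ⟨h2, by simp [runLoc, finalLocs, Aex], ?_⟩, by norm_num [runDur], rfl⟩
  exact ⟨((4, fun _ => (0:ℝ), onef), 0 + 0), by simp, by simp [privLocs, Aex]⟩

lemma ex_pub1 : ∃ tr, PubRun Aex tr ∧ runDur tr = 1 ∧ runEnergy tr = onef := by
  have h0 : Trace Aex [((0, fun _ => (0:ℝ), zf), 0)] :=
    Trace.init ((validState_Aex _ _ _).2 ⟨by norm_num [edgeTgt], fun _ => le_refl 0, zf_nonneg⟩)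
  have ew : resetClocks [] (elapseClocks (fun _ => (0:ℝ)) 1) = fun _ => (1:ℝ) := by
    rw [elapse_const, resetClocks_nil]; funext i; norm_num
  have ev : updateEnergies [1] (elapseEnergies Aex 0 zf 1) = onef := by
    rw [elapseEnergies_Aex, upd1]
  have h1 : Trace Aex [((2, fun _ => (1:ℝ), onef), 0 + 1), ((0, fun _ => (0:ℝ), zf), 0)] := by
    have hs := Trace.step (t := 1) (e := ((0:ℕ), gOne, none, ([]:List ℕ), [(1:ℤ)], 2)) h0
      (by norm_num) (step_valid_mid 0 (by norm_num) 0 le_rfl zf zf_nonneg 1)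
      (by simp [Aex, edges]) rfl
      ((satIneqs_gOne _ _).2 (by simp [elapseClocks]))
      ((validState_Aex _ _ _).2 ⟨by norm_num [edgeTgt], by simp only [edgeResets]; rw [ew]; intro i; norm_num,
        by simp only [edgeUpdates]; rw [ev]; exact onef_nonneg⟩)
    exact Trace.congr hs (by simp only [edgeTgt, edgeResets, edgeUpdates]; rw [ew, ev])
  have ew2 : resetClocks [] (elapseClocks (fun _ => (1:ℝ)) 0) = fun _ => (1:ℝ) := by
    rw [elapse_const, resetClocks_nil]; funext i; norm_num
  have ev2 : updateEnergies [0] (elapseEnergies Aex 2 onef 0) = onef := by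
    rw [elapseEnergies_Aex, upd0]
  have h2 : Trace Aex [((3, fun _ => (1:ℝ), onef), 0 + 1 + 0),
      ((2, fun _ => (1:ℝ), onef), 0 + 1), ((0, fun _ => (0:ℝ), zf), 0)] := by
    have hs := Trace.step (t := 0) (e := ((2:ℕ), gOne, none, ([]:List ℕ), [(0:ℤ)], 3)) h1
      le_rfl (step_valid_mid 2 (by norm_num) 1 (by norm_num) onef onef_nonneg 0)
      (by simp [Aex, edges]) rfl
      ((satIneqs_gOne _ _).2 (by simp [elapseClocks]))
      ((validState_Aex _ _ _).2 ⟨by norm_num [edgeTgt], by simp only [edgeResets]; rw [ew2]; intro i; norm_num,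
        by simp only [edgeUpdates]; rw [ev2]; exact onef_nonneg⟩)
    exact Trace.congr hs (by simp only [edgeTgt, edgeResets, edgeUpdates]; rw [ew2, ev2])
  refine ⟨_, ⟨h2, by simp [runLoc, finalLocs, Aex], ?_⟩, by norm_num [runDur], rfl⟩
  intro p hp
  simp only [List.mem_cons, List.not_mem_nil, or_false] at hp
  rcases hp with rfl | rfl | rfl <;> simp [privLocs, Aex]

lemma ex_pub0 : ∃ tr, PubRun Aex tr ∧ runDur tr = 0 ∧ runEnergy tr = zf := by
  have h0 : Trace Aex [((0, fun _ => (0:ℝ), zf), 0)] :=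
    Trace.init ((validState_Aex _ _ _).2 ⟨by norm_num [edgeTgt], fun _ => le_refl 0, zf_nonneg⟩)
  have ew : resetClocks [] (elapseClocks (fun _ => (0:ℝ)) 0) = fun _ => (0:ℝ) := by
    rw [elapse_const, resetClocks_nil]; funext i; norm_num
  have ev : updateEnergies [0] (elapseEnergies Aex 0 zf 0) = zf := by
    rw [elapseEnergies_Aex, upd0]
  have h1 : Trace Aex [((5, fun _ => (0:ℝ), zf), 0 + 0), ((0, fun _ => (0:ℝ), zf), 0)] := by
    have hs := Trace.step (t := 0) (e := ((0:ℕ), gZero, none, ([]:List ℕ), [(0:ℤ)], 5)) h0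
      le_rfl (step_valid_mid 0 (by norm_num) 0 le_rfl zf zf_nonneg 0)
      (by simp [Aex, edges]) rfl
      ((satIneqs_gZero _ _).2 (by simp [elapseClocks]))
      ((validState_Aex _ _ _).2 ⟨by norm_num [edgeTgt], by simp only [edgeResets]; rw [ew]; intro i; norm_num,
        by simp only [edgeUpdates]; rw [ev]; exact zf_nonneg⟩)
    exact Trace.congr hs (by simp only [edgeTgt, edgeResets, edgeUpdates]; rw [ew, ev])
  have ev2 : updateEnergies [0] (elapseEnergies Aex 5 zf 0) = zf := by
    rw [elapseEnergies_Aex, upd0]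
  have h2 : Trace Aex [((3, fun _ => (0:ℝ), zf), 0 + 0 + 0),
      ((5, fun _ => (0:ℝ), zf), 0 + 0), ((0, fun _ => (0:ℝ), zf), 0)] := by
    have hs := Trace.step (t := 0) (e := ((5:ℕ), gZero, none, ([]:List ℕ), [(0:ℤ)], 3)) h1
      le_rfl (step_valid_mid 5 (by norm_num) 0 le_rfl zf zf_nonneg 0)
      (by simp [Aex, edges]) rfl
      ((satIneqs_gZero _ _).2 (by simp [elapseClocks]))
      ((validState_Aex _ _ _).2 ⟨by norm_num [edgeTgt], by simp only [edgeResets]; rw [ew]; intro i; norm_num,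
        by simp only [edgeUpdates]; rw [ev2]; exact zf_nonneg⟩)
    exact Trace.congr hs (by simp only [edgeTgt, edgeResets, edgeUpdates]; rw [ew, ev2])
  refine ⟨_, ⟨h2, by simp [runLoc, finalLocs, Aex], ?_⟩, by norm_num [runDur], rfl⟩
  intro p hp
  simp only [List.mem_cons, List.not_mem_nil, or_false] at hp
  rcases hp with rfl | rfl | rfl <;> simp [privLocs, Aex]

lemma priv_pairs {tr} (h : PrivRun Aex tr) :
    (runDur tr = 1 ∧ runEnergy tr = zf) ∨ (runDur tr = 0 ∧ runEnergy tr = onef) := by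
  obtain ⟨ht, hfin, hpriv⟩ := h
  obtain ⟨-, hQ⟩ := charac ht
  have hl3 : runLoc tr = 3 := by simpa [finalLocs, Aex] using hfin
  have hp : HP tr := by
    obtain ⟨p, hp1, hp2⟩ := hpriv
    exact ⟨p, hp1, by simpa [privLocs, Aex] using hp2⟩
  rw [runLoc] at hl3
  rcases hQ with ⟨h',-⟩|⟨h',-⟩|⟨h',-⟩|⟨h',-⟩|⟨h',-⟩|⟨-, hsub⟩ <;> try omega
  rcases hsub with ⟨hd,he,-⟩|⟨hd,he,-⟩|⟨hd,he,hnp⟩|⟨hd,he,hnp⟩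
  · exact Or.inl ⟨hd, he⟩
  · exact Or.inr ⟨hd, he⟩
  · obtain ⟨p, hp1, hp2⟩ := hp; exact absurd hp2 (hnp p hp1)
  · obtain ⟨p, hp1, hp2⟩ := hp; exact absurd hp2 (hnp p hp1)

lemma pub_pairs {tr} (h : PubRun Aex tr) :
    (runDur tr = 1 ∧ runEnergy tr = onef) ∨ (runDur tr = 0 ∧ runEnergy tr = zf) := by
  obtain ⟨ht, hfin, hpub⟩ := h
  obtain ⟨-, hQ⟩ := charac ht
  have hl3 : runLoc tr = 3 := by simpa [finalLocs, Aex] using hfin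
  have hp : NP tr := by
    intro p hp1 hp2
    exact hpub p hp1 (by simp [privLocs, Aex]; tauto)
  rw [runLoc] at hl3
  rcases hQ with ⟨h',-⟩|⟨h',-⟩|⟨h',-⟩|⟨h',-⟩|⟨h',-⟩|⟨-, hsub⟩ <;> try omega
  rcases hsub with ⟨hd,he,hhp⟩|⟨hd,he,hhp⟩|⟨hd,he,-⟩|⟨hd,he,-⟩
  · obtain ⟨p, hp1, hp2⟩ := hhp; exact absurd hp2 (hp p hp1)
  · obtain ⟨p, hp1, hp2⟩ := hhp; exact absurd hp2 (hp p hp1)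
  · exact Or.inl ⟨hd, he⟩
  · exact Or.inr ⟨hd, he⟩

lemma wellFormed_Aex : WellFormed Aex := by
  constructor
  · norm_num [numLoc, Aex]
  refine ⟨by simp [privLocs, Aex], by simp [finalLocs, Aex], ?_, ?_, ?_, ?_, ?_, ?_, ?_⟩
  · intro l hl; simp [privLocs, Aex] at hl; rcases hl with rfl | rfl <;> norm_num [numLoc, Aex]
  · intro l hl; simp [finalLocs, Aex] at hl; subst hl
    exact ⟨by norm_num [numLoc, Aex], by simp [privLocs, Aex]⟩
  · simp [invs, numLoc, Aex]
  · intro g hg q hq; simp [invs, Aex] at hg; rcases hg with rfl|rfl|rfl|rfl|rfl|rfl <;> simp at hq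
  · simp [rates, numLoc, Aex]
  · intro r hr; simp [rates, Aex] at hr
    rcases hr with rfl|rfl|rfl|rfl|rfl|rfl <;> simp [numEn, Aex]
  · intro e he
    simp only [Aex, edges, List.mem_cons, List.not_mem_nil, or_false] at he
    rcases he with rfl|rfl|rfl|rfl|rfl|rfl|rfl|rfl <;>
      refine ⟨by norm_num [edgeSrc, numLoc, Aex], by norm_num [edgeTgt, numLoc, Aex],
        by simp [edgeSrc, finalLocs, Aex], by simp [edgeAct], ?_, by simp [edgeResets],
        by simp [edgeUpdates, numEn, Aex]⟩ <;>
      · intro q hq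
        simp only [edgeGuard, gOne, gZero, List.mem_cons, List.not_mem_nil, or_false] at hq
        first
        | (rcases hq with rfl | rfl <;> norm_num [numClk, numEn, Aex])
        | (rcases hq with rfl; norm_num [numClk, numEn, Aex])

theorem main_statement :
    WellFormed Aex ∧ numClk Aex = 1 ∧ numEn Aex = 1 ∧
      ETOpaqueFull Aex ∧ ENOpaque Var3.full Aex ∧
      ¬ ETENOpaque Var3.weak Aex ∧ ¬ ETENOpaque Var3.full Aex := by
  obtain ⟨t1, ht1, hd1, he1⟩ := ex_priv1
  obtain ⟨t0, ht0, hd0, he0⟩ := ex_priv0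
  obtain ⟨s1, hs1, hsd1, hse1⟩ := ex_pub1
  obtain ⟨s0, hs0, hsd0, hse0⟩ := ex_pub0
  have hnw : ¬ ETENOpaque Var3.weak Aex := by
    intro hw
    have hmem : ((1:ℝ), zf) ∈ DEVpriv Aex := ⟨t1, ht1, hd1, he1⟩
    obtain ⟨tr, hpub, hdur, hen⟩ := hw hmem
    rcases pub_pairs hpub with ⟨-, he⟩ | ⟨hd, -⟩
    · exact zf_ne_onef ((show runEnergy tr = zf from hen).symm.trans he)
    · rw [hdur] at hd; norm_num at hd
  refine ⟨wellFormed_Aex, rfl, rfl, ?_, ?_, hnw, fun hf => hnw (subset_of_eq hf)⟩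
  · apply Set.eq_of_subset_of_subset
    · rintro d ⟨tr, hpr, rfl⟩
      rcases priv_pairs hpr with ⟨hd, -⟩ | ⟨hd, -⟩
      · exact ⟨s1, hs1, hsd1.trans hd.symm⟩
      · exact ⟨s0, hs0, hsd0.trans hd.symm⟩
    · rintro d ⟨tr, hpb, rfl⟩
      rcases pub_pairs hpb with ⟨hd, -⟩ | ⟨hd, -⟩
      · exact ⟨t1, ht1, hd1.trans hd.symm⟩
      · exact ⟨t0, ht0, hd0.trans hd.symm⟩
  · apply Set.eq_of_subset_of_subset
    · rintro v ⟨tr, hpr, rfl⟩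
      rcases priv_pairs hpr with ⟨-, he⟩ | ⟨-, he⟩
      · exact ⟨s0, hs0, hse0.trans he.symm⟩
      · exact ⟨s1, hs1, hse1.trans he.symm⟩
    · rintro v ⟨tr, hpb, rfl⟩
      rcases pub_pairs hpb with ⟨-, he⟩ | ⟨-, he⟩
      · exact ⟨t0, ht0, he0.trans he.symm⟩
      · exact ⟨t1, ht1, he1.trans he.symm⟩

/-- There exists a guarded META with one clock and one energy
variable that is fully ET-opaque and fully EN-opaque but neither weakly nor fully
ET-EN-opaque.  Consequently, full ET-opacity together with full EN-opacity does not
imply weak (nor full) ET-EN-opacity. -/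
theorem fullET_and_fullEN_not_imp_weakETEN :
    ∃ A : GMETA, WellFormed A ∧ numClk A = 1 ∧ numEn A = 1 ∧
      ETOpaqueFull A ∧ ENOpaque Var3.full A ∧
      ¬ ETENOpaque Var3.weak A ∧ ¬ ETENOpaque Var3.full A := by
  exact ⟨Aex, main_statement⟩

end METAOpacity
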